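/- Let A = {2^n : n ∈ ℕ} ⊆ ℤ. Then A does not have the sumset property: there do not exist infinite sets B, C ⊆ ℤ with B + C ⊆ A. -/

import Mathlib

/-- The set of powers of 2 in `ℤ` does not have the sumset property. -/
theorem stmt13 :
    ¬ ∃ B C : Set ℤ, B.Infinite ∧ C.Infinite ∧
      ∀ b ∈ B, ∀ c ∈ C, b + c ∈ {x : ℤ | ∃ n : ℕ, x = 2 ^ n} := by
  rintro ⟨B, C, hB, hC, hBC⟩
  obtain ⟨c1, hc1, c2, hc2, hne⟩ := hC.nontrivial
  wlog hlt : c1 < c2 generalizing c1 c2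
  · exact this c2 hc2 c1 hc1 hne.symm (lt_of_le_of_ne (not_lt.mp hlt) hne.symm)
  set d : ℤ := c2 - c1 with hd
  have hd0 : 0 < d := sub_pos.mpr hlt
  apply hB
  apply Set.Finite.subset
    (Finset.finite_toSet ((Finset.range d.toNat).image (fun m => (2:ℤ)^m - c1)))
  intro b hb
  obtain ⟨m, hm⟩ := hBC b hb c1 hc1
  obtain ⟨n, hn⟩ := hBC b hb c2 hc2
  have hmn : m < n := by
    have h2 : (2:ℤ)^m < 2^n := by rw [← hm, ← hn]; omega
    exact (pow_lt_pow_iff_right₀ (by norm_num : (1:ℤ) < 2)).mp h2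
  have hle : (2:ℤ)^m ≤ d := by
    have h3 : (2:ℤ)^(m+1) ≤ 2^n :=
      pow_le_pow_right₀ (by norm_num) hmn
    have h4 : (2:ℤ)^(m+1) = 2 * 2^m := by ring
    linarith
  have hm2 : (m : ℤ) < 2^m := by
    exact_mod_cast (Nat.lt_two_pow_self (n := m))
  have hmd : m < d.toNat := by
    have : (m : ℤ) < d := lt_of_lt_of_le hm2 hle
    omega
  simp only [Finset.coe_image, Set.mem_image, Finset.mem_coe, Finset.mem_range]
  exact ⟨m, hmd, by linarith⟩
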